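/- Let k be a number field and let x = (x₁, x₂) be a pair of 3×3 matrices over k. Then the binary cubic form F_x(X,Y) = det(X·x₁ + Y·x₂) is irreducible as an element of the polynomial ring k[X,Y] if and only if x is k-stable, i.e., for every g = (g₁,g₂,g₃) ∈ GL₃(k) × GL₃(k) × GL₂(k) the convex hull of the finite set of projected weight vectors { (e_j − (1/3)(1,1,1), e_k − (1/3)(1,1,1), f_i − (1/2)(1,1)) : 1 ≤ j,k ≤ 3, 1 ≤ i ≤ 2, and the (j,k) entry of (g·x)_i is nonzero } contains a neighborhood of the origin in the subspace 𝔱* = { (u,w,z) ∈ ℝ³ × ℝ³ × ℝ² : the coordinates of u sum to 0, the coordinates of w sum to 0, the coordinates of z sum to 0 }. Here e_j ∈ ℝ³ and f_i ∈ ℝ² are standard basis vectors. (This is Theorem (2.1) for the E₆ case, in which the set L₀ equals the set of x with F_x irreducible.) -/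

import Mathlib

open Matrix MvPolynomial

noncomputable section
namespace E6proof
open Finset Polynomial

variable {K : Type*} [Field K]

/-- the pencil polynomial -/
def pen (x : Fin 2 → Matrix (Fin 3) (Fin 3) K) : MvPolynomial (Fin 2) K :=
  (Matrix.of fun a b => (MvPolynomial.X 0 : MvPolynomial (Fin 2) K) * MvPolynomial.C (x 0 a b)
      + MvPolynomial.X 1 * MvPolynomial.C (x 1 a b)).det

lemma eval_pen (x : Fin 2 → Matrix (Fin 3) (Fin 3) K) (u : Fin 2 → K) :
    MvPolynomial.eval u (pen x) = (u 0 • x 0 + u 1 • x 1).det := by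
  unfold pen
  rw [RingHom.map_det]
  congr 1
  ext a b
  simp [Matrix.map_apply, mul_comm]

def toSX : MvPolynomial (Fin 2) K →+* Polynomial (Polynomial K) :=
  (eval₂Hom ((Polynomial.C).comp (Polynomial.C))
    ![Polynomial.X, Polynomial.C Polynomial.X])

def backSX : Polynomial (Polynomial K) →+* MvPolynomial (Fin 2) K :=
  Polynomial.eval₂RingHom
    (Polynomial.eval₂RingHom (MvPolynomial.C) (MvPolynomial.X 1)) (MvPolynomial.X 0)

lemma backSX_toSX (p : MvPolynomial (Fin 2) K) : backSX (toSX p) = p := by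
  have : (backSX).comp (toSX) = RingHom.id (MvPolynomial (Fin 2) K) := by
    apply MvPolynomial.ringHom_ext
    · intro c; simp [toSX, backSX]
    · intro i
      fin_cases i <;> simp [toSX, backSX]
  exact RingHom.congr_fun this p

def nuSX (t s : K) : Polynomial (Polynomial K) →+* K :=
  Polynomial.eval₂RingHom (Polynomial.evalRingHom s) t

lemma nuSX_toSX (t s : K) (p : MvPolynomial (Fin 2) K) :
    nuSX t s (toSX p) = MvPolynomial.eval ![t, s] p := by
  have : (nuSX t s).comp (toSX) = (MvPolynomial.eval ![t, s] : MvPolynomial (Fin 2) K →+* K) := by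
    apply MvPolynomial.ringHom_ext
    · intro c; simp [toSX, nuSX]
    · intro i
      fin_cases i <;> simp [toSX, nuSX]
  exact RingHom.congr_fun this p


def sub2 (m : Matrix (Fin 2) (Fin 2) K) :
    MvPolynomial (Fin 2) K →+* MvPolynomial (Fin 2) K :=
  (MvPolynomial.aeval fun j => ∑ i, MvPolynomial.C (m i j) * MvPolynomial.X i).toRingHom

lemma sub2_X (m : Matrix (Fin 2) (Fin 2) K) (j : Fin 2) :
    sub2 m (MvPolynomial.X j) = ∑ i, MvPolynomial.C (m i j) * MvPolynomial.X i := by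
  simp [sub2]

lemma sub2_comp (m m' : Matrix (Fin 2) (Fin 2) K) (p : MvPolynomial (Fin 2) K) :
    sub2 m (sub2 m' p) = sub2 (m * m') p := by
  have : (sub2 m).comp (sub2 m') = sub2 (m * m') := by
    apply MvPolynomial.ringHom_ext
    · intro c; simp [sub2]
    · intro j
      simp only [RingHom.comp_apply, sub2_X, _root_.map_sum]
      have e1 : ∀ x : Fin 2, (sub2 m) (MvPolynomial.C (m' x j) * MvPolynomial.X x)
          = ∑ i, MvPolynomial.C (m i x * m' x j) * MvPolynomial.X i := by
        intro x
        rw [_root_.map_mul, sub2_X]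
        simp only [sub2, AlgHom.toRingHom_eq_coe, RingHom.coe_coe, MvPolynomial.aeval_C,
          MvPolynomial.algebraMap_eq]
        rw [Finset.mul_sum]
        refine Finset.sum_congr rfl fun i _ => ?_
        rw [MvPolynomial.C_mul]; ring
      rw [Finset.sum_congr rfl (fun x _ => e1 x), Finset.sum_comm]
      refine Finset.sum_congr rfl fun i _ => ?_
      rw [← Finset.sum_mul, ← _root_.map_sum]
      rw [Matrix.mul_apply]
  exact RingHom.congr_fun this p

lemma sub2_one (p : MvPolynomial (Fin 2) K) : sub2 1 p = p := by
  have : (sub2 (1 : Matrix (Fin 2) (Fin 2) K)) = RingHom.id _ := by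
    apply MvPolynomial.ringHom_ext
    · intro c; simp [sub2]
    · intro j
      rw [RingHom.id_apply, sub2_X]
      rw [Finset.sum_eq_single j] <;> simp +contextual [Matrix.one_apply, eq_comm]
  exact RingHom.congr_fun this p

lemma eval_sub2 (m : Matrix (Fin 2) (Fin 2) K) (u : Fin 2 → K) (p : MvPolynomial (Fin 2) K) :
    MvPolynomial.eval u (sub2 m p) = MvPolynomial.eval (fun j => ∑ i, u i * m i j) p := by
  have : ((MvPolynomial.eval u : MvPolynomial (Fin 2) K →+* K)).comp (sub2 m)
      = (MvPolynomial.eval (fun j => ∑ i, u i * m i j) : MvPolynomial (Fin 2) K →+* K) := by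
    apply MvPolynomial.ringHom_ext
    · intro c; simp [sub2]
    · intro j
      simp [sub2_X, mul_comm]
  exact RingHom.congr_fun this p

lemma X0_dvd_of_vanish [Infinite K] (p : MvPolynomial (Fin 2) K)
    (h : ∀ t : K, MvPolynomial.eval ![(0 : K), t] p = 0) :
    ∃ q, p = MvPolynomial.X 0 * q := by
  have h0 : (toSX p).coeff 0 = 0 := by
    apply Polynomial.zero_of_eval_zero
    intro s
    have h1 : nuSX 0 s (toSX p) = 0 := by rw [nuSX_toSX]; exact h s
    rwa [nuSX, Polynomial.coe_eval₂RingHom, Polynomial.eval₂_at_zero] at h1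
  obtain ⟨q', hq'⟩ := Polynomial.X_dvd_iff.mpr h0
  refine ⟨backSX q', ?_⟩
  have hX : backSX (Polynomial.X : Polynomial (Polynomial K)) = MvPolynomial.X 0 := by
    simp [backSX]
  rw [← backSX_toSX p, hq', _root_.map_mul, hX]


def lineH (u : Fin 2 → K) : MvPolynomial (Fin 2) K →+* Polynomial K :=
  eval₂Hom (Polynomial.C) (fun i => Polynomial.C (u i) * Polynomial.X)

lemma eval_lineH (u : Fin 2 → K) (t : K) (p : MvPolynomial (Fin 2) K) :
    Polynomial.eval t (lineH u p) = MvPolynomial.eval (fun i => u i * t) p := by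
  have : ((Polynomial.evalRingHom t)).comp (lineH u)
      = (MvPolynomial.eval (fun i => u i * t) : MvPolynomial (Fin 2) K →+* K) := by
    apply MvPolynomial.ringHom_ext
    · intro c; simp [lineH]
    · intro i; simp [lineH]
  exact RingHom.congr_fun this p

lemma eval_mul_pen (x : Fin 2 → Matrix (Fin 3) (Fin 3) K) (t : K) (u : Fin 2 → K) :
    MvPolynomial.eval (fun i => u i * t) (pen x) = t ^ 3 * MvPolynomial.eval u (pen x) := by
  rw [eval_pen, eval_pen]
  have h : (u 0 * t) • x 0 + (u 1 * t) • x 1 = t • (u 0 • x 0 + u 1 • x 1) := by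
    rw [smul_add, smul_smul, smul_smul, mul_comm t (u 0), mul_comm t (u 1)]
  rw [h, Matrix.det_smul]
  simp

lemma no_root_of_irreducible [Infinite K] [CharZero K] (x : Fin 2 → Matrix (Fin 3) (Fin 3) K)
    (hirr : Irreducible (pen x)) (w : Fin 2 → K) (hw : MvPolynomial.eval w (pen x) = 0) :
    w = 0 := by
  by_contra hw0
  obtain ⟨m, hm1, hmdet⟩ : ∃ m : Matrix (Fin 2) (Fin 2) K, m 1 = w ∧ IsUnit m.det := by
    by_cases h0 : w 0 ≠ 0
    · refine ⟨Matrix.of ![![0,1], w], rfl, ?_⟩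
      rw [Matrix.det_fin_two]
      simp [isUnit_iff_ne_zero, h0]
    · push_neg at h0
      have h1 : w 1 ≠ 0 := by
        intro h1; apply hw0; funext i; fin_cases i <;> simp [h0, h1]
      refine ⟨Matrix.of ![![1,0], w], rfl, ?_⟩
      rw [Matrix.det_fin_two]
      simp [isUnit_iff_ne_zero, h1]
  set G := sub2 m (pen x) with hG
  have hvan : ∀ t : K, MvPolynomial.eval ![0, t] G = 0 := by
    intro t
    rw [hG, eval_sub2]
    have he : (fun j => ∑ i, (![(0:K), t]) i * m i j) = fun j => w j * t := by
      funext j; rw [Fin.sum_univ_two]; simp [← hm1, mul_comm]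
    rw [he, eval_mul_pen, hw, mul_zero]
  obtain ⟨q, hq⟩ := X0_dvd_of_vanish G hvan
  have hpen : pen x = sub2 m⁻¹ (MvPolynomial.X 0) * sub2 m⁻¹ q := by
    have h2 : sub2 m⁻¹ G = pen x := by
      rw [hG, sub2_comp, Matrix.nonsing_inv_mul _ hmdet, sub2_one]
    rw [← h2, hq, _root_.map_mul]
  rcases hirr.isUnit_or_isUnit hpen with hL | hQ
  · have h0 : MvPolynomial.eval (0 : Fin 2 → K) (sub2 m⁻¹ (MvPolynomial.X 0)) = 0 := by
      rw [eval_sub2]; simp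
    have hu := hL.map (MvPolynomial.eval (0 : Fin 2 → K) : MvPolynomial (Fin 2) K →+* K)
    rw [h0] at hu
    exact not_isUnit_zero hu
  · have key : ∀ u : Fin 2 → K, MvPolynomial.eval u (pen x) = 0 := by
      intro u
      have hq' := hQ.map (lineH u)
      obtain ⟨c, -, hc⟩ := Polynomial.isUnit_iff.mp hq'
      have hLt : ∀ t : K, MvPolynomial.eval (fun i => u i * t) (sub2 m⁻¹ (MvPolynomial.X 0))
          = t * MvPolynomial.eval u (sub2 m⁻¹ (MvPolynomial.X 0)) := by
        intro t
        rw [eval_sub2, eval_sub2]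
        simp only [MvPolynomial.eval_X]
        rw [Finset.mul_sum]
        refine Finset.sum_congr rfl fun i _ => ?_
        ring
      have hFt : ∀ t : K, t ^ 3 * MvPolynomial.eval u (pen x)
          = (t * MvPolynomial.eval u (sub2 m⁻¹ (MvPolynomial.X 0))) * c := by
        intro t
        rw [← eval_mul_pen, ← hLt]
        calc MvPolynomial.eval (fun i => u i * t) (pen x)
            = Polynomial.eval t (lineH u (pen x)) := (eval_lineH u t _).symm
          _ = Polynomial.eval t (lineH u (sub2 m⁻¹ (MvPolynomial.X 0)) * Polynomial.C c) := by
              rw [hpen, _root_.map_mul, hc]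
          _ = Polynomial.eval t (lineH u (sub2 m⁻¹ (MvPolynomial.X 0))) * c := by
              rw [Polynomial.eval_mul, Polynomial.eval_C]
          _ = _ := by rw [eval_lineH]
      have h1 := hFt 1
      have h2 := hFt 2
      rw [one_pow, one_mul, one_mul] at h1
      rw [h1] at h2
      have : (2:K) ^ 3 * (MvPolynomial.eval u (sub2 m⁻¹ (MvPolynomial.X 0)) * c)
          = 2 * (MvPolynomial.eval u (sub2 m⁻¹ (MvPolynomial.X 0)) * c) := by
        rw [h2]; ring
      have h6 : MvPolynomial.eval u (sub2 m⁻¹ (MvPolynomial.X 0)) * c = 0 := by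
        have h23 : ((2:K)^3 - 2) ≠ 0 := by norm_num
        have := sub_eq_zero.mpr this.symm
        rw [show (2:K) * (MvPolynomial.eval u (sub2 m⁻¹ (MvPolynomial.X 0)) * c)
            - 2 ^ 3 * (MvPolynomial.eval u (sub2 m⁻¹ (MvPolynomial.X 0)) * c)
            = (2 - 2^3) * (MvPolynomial.eval u (sub2 m⁻¹ (MvPolynomial.X 0)) * c) by ring] at this
        have h23' : ((2:K) - 2^3) ≠ 0 := by norm_num
        exact (mul_eq_zero.mp this).resolve_left h23'
      rw [h1, h6]
    have hzero : pen x = 0 := by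
      apply MvPolynomial.funext
      intro v; rw [key v]; simp
    rw [hzero] at hirr
    exact not_irreducible_zero hirr


lemma backSX_CC (c : K) :
    backSX (Polynomial.C (Polynomial.C c)) = MvPolynomial.C c := by
  simp [backSX]

lemma exists_root_of_not_irreducible (x : Fin 2 → Matrix (Fin 3) (Fin 3) K)
    (h : ¬ Irreducible (pen x)) : ∃ w : Fin 2 → K, w ≠ 0 ∧ MvPolynomial.eval w (pen x) = 0 := by
  have e10 : MvPolynomial.eval ![(1:K), 0] (pen x) = (x 0).det := by
    rw [eval_pen]; simp
  by_cases hdx : (x 0).det = 0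
  · exact ⟨![1,0], by intro hh; simpa using congrFun hh 0, by rw [e10, hdx]⟩
  set N : Matrix (Fin 3) (Fin 3) K := (x 0)⁻¹ * (x 1) with hN
  set M₂ : Matrix (Fin 3) (Fin 3) (Polynomial K) :=
    N.map (fun c => -(Polynomial.X * Polynomial.C c)) with hM₂
  have hdet0 : IsUnit (x 0).det := isUnit_iff_ne_zero.mpr hdx
  have hx1 : x 0 * N = x 1 := Matrix.mul_nonsing_inv_cancel_left _ _ hdet0
  set CC : K →+* Polynomial (Polynomial K) := (Polynomial.C).comp (Polynomial.C) with hCC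
  have hstruct : toSX (pen x)
      = Polynomial.C (Polynomial.C (x 0).det) * (M₂).charpoly := by
    unfold pen
    rw [RingHom.map_det, RingHom.mapMatrix_apply]
    have hmat : (Matrix.of fun a b => (MvPolynomial.X 0 : MvPolynomial (Fin 2) K) *
          MvPolynomial.C (x 0 a b) + MvPolynomial.X 1 * MvPolynomial.C (x 1 a b)).map toSX
        = ((x 0).map CC) * (charmatrix M₂) := by
      ext a b : 1
      have hL : toSX ((MvPolynomial.X 0 : MvPolynomial (Fin 2) K) * MvPolynomial.C (x 0 a b)
          + MvPolynomial.X 1 * MvPolynomial.C (x 1 a b))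
          = Polynomial.X * Polynomial.C (Polynomial.C (x 0 a b))
            + Polynomial.C Polynomial.X * Polynomial.C (Polynomial.C (x 1 a b)) := by
        simp [toSX]
      have hmm : ∀ k, ((x 0).map CC) a k * charmatrix M₂ k b
          = (if k = b then Polynomial.X * Polynomial.C (Polynomial.C (x 0 a b)) else 0)
            + Polynomial.C Polynomial.X * Polynomial.C (Polynomial.C (x 0 a k * N k b)) := by
        intro k
        rw [charmatrix_apply]
        by_cases hk : k = b
        · subst hk
          simp only [Matrix.map_apply, hM₂, Matrix.diagonal_apply_eq, eq_self_iff_true, if_true, hCC,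
            RingHom.coe_comp, Function.comp_apply, map_neg, _root_.map_mul]
          ring
        · simp only [Matrix.map_apply, hM₂, Matrix.diagonal_apply_ne _ hk, if_neg hk, hCC,
            RingHom.coe_comp, Function.comp_apply, map_neg, _root_.map_mul]
          ring
      rw [Matrix.map_apply, Matrix.of_apply, hL, Matrix.mul_apply,
        Finset.sum_congr rfl (fun k _ => hmm k), Finset.sum_add_distrib]
      rw [Finset.sum_ite_eq' Finset.univ b
        (fun _ => Polynomial.X * Polynomial.C (Polynomial.C (x 0 a b)))]
      simp only [Finset.mem_univ, if_pos]
      congr 1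
      rw [← Finset.mul_sum]
      refine congrArg (fun q : Polynomial (Polynomial K) => Polynomial.C Polynomial.X * q) ?_
      rw [show (∑ k, Polynomial.C (Polynomial.C (x 0 a k * N k b)))
          = Polynomial.C (Polynomial.C (∑ k, x 0 a k * N k b)) by
        rw [_root_.map_sum, _root_.map_sum]]
      rw [show (∑ k, x 0 a k * N k b) = (x 0 * N) a b from (Matrix.mul_apply).symm, hx1]
    rw [hmat, Matrix.det_mul]
    refine congrArg (· * Matrix.charpoly M₂) ?_
    rw [← RingHom.mapMatrix_apply, ← RingHom.map_det]
    rfl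
  set F' := toSX (pen x) with hF'
  have hcp_deg : (M₂).charpoly.natDegree = 3 := by
    rw [Matrix.charpoly_natDegree_eq_dim]; simp
  have hF'deg : F'.natDegree = 3 := by
    rw [hstruct, Polynomial.natDegree_C_mul (Polynomial.C_ne_zero.mpr hdx), hcp_deg]
  have hF'lead : F'.leadingCoeff = Polynomial.C (x 0).det := by
    rw [hstruct, Polynomial.leadingCoeff_mul, Polynomial.leadingCoeff_C,
      (M₂).charpoly_monic.leadingCoeff, mul_one]
  have hF'ne : F' ≠ 0 := fun hh => by rw [hh] at hF'deg; simp at hF'deg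
  by_cases hu : IsUnit (pen x)
  · have := Polynomial.natDegree_eq_zero_of_isUnit (hu.map toSX)
    rw [← hF'] at this
    omega
  rw [irreducible_iff] at h
  push_neg at h
  obtain ⟨A, B, hAB, hA, hB⟩ := h hu
  set A' := toSX A with hA'
  set B' := toSX B with hB'
  have hmulF : F' = A' * B' := by rw [hF', hAB, _root_.map_mul]
  have hA'0 : A' ≠ 0 := by intro hh; rw [hmulF, hh, zero_mul] at hF'ne; exact hF'ne rfl
  have hB'0 : B' ≠ 0 := by intro hh; rw [hmulF, hh, mul_zero] at hF'ne; exact hF'ne rfl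
  have hdegsum : A'.natDegree + B'.natDegree = 3 := by
    rw [← hF'deg, hmulF, Polynomial.natDegree_mul hA'0 hB'0]
  have hlead : A'.leadingCoeff * B'.leadingCoeff = Polynomial.C (x 0).det := by
    rw [← hF'lead, hmulF, Polynomial.leadingCoeff_mul]
  have hlA0 : A'.leadingCoeff ≠ 0 := Polynomial.leadingCoeff_ne_zero.mpr hA'0
  have hlB0 : B'.leadingCoeff ≠ 0 := Polynomial.leadingCoeff_ne_zero.mpr hB'0
  have hleaddeg : A'.leadingCoeff.natDegree = 0 ∧ B'.leadingCoeff.natDegree = 0 := by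
    have h0 : A'.leadingCoeff.natDegree + B'.leadingCoeff.natDegree = 0 := by
      rw [← Polynomial.natDegree_mul hlA0 hlB0, hlead, Polynomial.natDegree_C]
    omega
  -- helper: a factor whose toSX has natDegree 0 is a unit
  have hconst : ∀ P : MvPolynomial (Fin 2) K, toSX P ≠ 0 → (toSX P).natDegree = 0 →
      (toSX P).leadingCoeff.natDegree = 0 → IsUnit P := by
    intro P hP0 hPd hPl
    have h1 : toSX P = Polynomial.C ((toSX P).coeff 0) :=
      Polynomial.eq_C_of_natDegree_eq_zero hPd
    have h2 : (toSX P).coeff 0 = (toSX P).leadingCoeff := by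
      rw [Polynomial.leadingCoeff, hPd]
    have h3 : (toSX P).leadingCoeff = Polynomial.C ((toSX P).leadingCoeff.coeff 0) :=
      Polynomial.eq_C_of_natDegree_eq_zero hPl
    set c := (toSX P).leadingCoeff.coeff 0 with hc
    have hc0 : c ≠ 0 := by
      intro hh
      rw [hh, map_zero] at h3
      exact (Polynomial.leadingCoeff_ne_zero.mpr hP0) h3
    have hPC : P = MvPolynomial.C c := by
      rw [← backSX_toSX P, h1, h2, h3, backSX_CC]
    rw [hPC]
    exact (isUnit_iff_ne_zero.mpr hc0).map (MvPolynomial.C : K →+* MvPolynomial (Fin 2) K)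
  -- helper: extract root from a degree-1 factor
  have extract : ∀ P' D' : Polynomial (Polynomial K), F' = P' * D' → P'.natDegree = 1 →
      P'.leadingCoeff.natDegree = 0 → P'.leadingCoeff ≠ 0 →
      ∃ w : Fin 2 → K, w ≠ 0 ∧ MvPolynomial.eval w (pen x) = 0 := by
    intro P' D' hPD hP1 hPl hPl0
    set c := P'.leadingCoeff.coeff 0 with hc
    have hlc : P'.leadingCoeff = Polynomial.C c := Polynomial.eq_C_of_natDegree_eq_zero hPl
    have hc0 : c ≠ 0 := by
      intro hh; rw [hh, map_zero] at hlc; exact hPl0 hlc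
    have hrep : P' = Polynomial.C (Polynomial.C c) * Polynomial.X + Polynomial.C (P'.coeff 0) := by
      have h1 := Polynomial.eq_X_add_C_of_natDegree_le_one (le_of_eq hP1)
      rw [show P'.coeff 1 = P'.leadingCoeff by rw [Polynomial.leadingCoeff, hP1], hlc] at h1
      exact h1
    set t : K := -((P'.coeff 0).eval 1) * c⁻¹ with ht
    have hnuP : nuSX t 1 P' = 0 := by
      rw [hrep]
      simp [nuSX, ht]
      field_simp
      ring
    refine ⟨![t, 1], ?_, ?_⟩
    · intro hh
      have := congrFun hh 1
      simp at this
    · have := nuSX_toSX t 1 (pen x)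
      rw [← this, ← hF', hPD, _root_.map_mul, hnuP, zero_mul]
  -- case analysis on degree of A'
  have hcases : A'.natDegree = 0 ∨ A'.natDegree = 3 ∨ A'.natDegree = 1 ∨ A'.natDegree = 2 := by
    omega
  rcases hcases with h0 | h3 | h1 | h2
  · exact absurd (hconst A hA'0 h0 hleaddeg.1) hA
  · have hB0 : B'.natDegree = 0 := by omega
    exact absurd (hconst B hB'0 hB0 hleaddeg.2) hB
  · exact extract A' B' hmulF h1 hleaddeg.1 hlA0
  · have hB1 : B'.natDegree = 1 := by omega
    exact extract B' A' (by rw [hmulF, mul_comm]) hB1 hleaddeg.2 hlB0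


lemma exists_mulVec_single {ι : Type*} [Fintype ι] [DecidableEq ι] (j₀ : ι) (p : ι → K)
    (hp : p ≠ 0) : ∃ T : Matrix ι ι K, IsUnit T.det ∧ T.mulVec p = Pi.single j₀ 1 := by
  obtain ⟨i₀, hi₀⟩ : ∃ i, p i ≠ 0 := by
    by_contra hh; push_neg at hh; exact hp (funext hh)
  set e₀ : ι → K := Pi.single i₀ 1 with he₀
  set u : ι → K := (p i₀)⁻¹ • e₀ - (p i₀)⁻¹ • p with hu
  set T1 : Matrix ι ι K := 1 + Matrix.replicateCol (Fin 1) u * Matrix.replicateRow (Fin 1) e₀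
    with hT1
  have hcr : ∀ j k, (Matrix.replicateCol (Fin 1) u * Matrix.replicateRow (Fin 1) e₀) j k
      = u j * e₀ k := by
    intro j k
    rw [Matrix.mul_apply]
    simp
  have hdet1 : T1.det = (p i₀)⁻¹ := by
    erw [hT1, Matrix.det_one_add_replicateCol_mul_replicateRow]
    simp [hu, he₀, Pi.single_apply, hi₀]
  have hvec1 : T1.mulVec p = e₀ := by
    funext j
    have hsum : ∑ k, u j * e₀ k * p k = u j * p i₀ := by
      rw [Finset.sum_eq_single i₀]
      · simp [he₀]
      · intro k _ hk; simp [he₀, Pi.single_apply, hk]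
      · intro hk; exact absurd (Finset.mem_univ i₀) hk
    rw [hT1, Matrix.add_mulVec, Matrix.one_mulVec]
    simp only [Pi.add_apply]
    have hstep : (Matrix.replicateCol (Fin 1) u * Matrix.replicateRow (Fin 1) e₀).mulVec p j
        = u j * p i₀ := by
      simp only [Matrix.mulVec, dotProduct]
      rw [Finset.sum_congr rfl fun k _ => by rw [hcr j k]]
      exact hsum
    rw [hstep, hu]
    simp only [Pi.sub_apply, Pi.smul_apply, smul_eq_mul]
    rcases eq_or_ne j i₀ with rfl | hj
    · rw [he₀, Pi.single_eq_same]
      field_simp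
      ring
    · rw [he₀, Pi.single_eq_of_ne hj]
      field_simp
      ring
  set σ : Equiv.Perm ι := Equiv.swap i₀ j₀ with hσ
  set T2 : Matrix ι ι K := σ.permMatrix K with hT2
  have hvec2 : ∀ q : ι → K, T2.mulVec q = q ∘ σ := by
    intro q; funext i
    simp only [hT2, Equiv.Perm.permMatrix, Matrix.mulVec, dotProduct,
      PEquiv.toMatrix_apply, Equiv.toPEquiv_apply, Option.mem_def, Option.some.injEq,
      Function.comp_apply]
    rw [Finset.sum_eq_single (σ i)]
    · simp
    · intro k _ hk; rw [if_neg (by exact fun hh => hk hh.symm), zero_mul]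
    · intro hk; exact absurd (Finset.mem_univ _) hk
  refine ⟨T2 * T1, ?_, ?_⟩
  · rw [Matrix.det_mul, hdet1, hT2, Matrix.det_permutation]
    rcases Int.units_eq_one_or (Equiv.Perm.sign σ) with hs | hs <;>
      simp [hs, isUnit_iff_ne_zero, hi₀]
  · rw [← Matrix.mulVec_mulVec, hvec1, hvec2]
    funext i
    rcases eq_or_ne i j₀ with rfl | hij
    · simp [hσ, he₀, Pi.single_apply]
    · simp only [Function.comp_apply, hσ, he₀]
      rw [Pi.single_apply, Pi.single_apply, if_neg hij, if_neg]
      intro hh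
      have h2 := congrArg (Equiv.swap i₀ j₀) hh
      rw [Equiv.swap_apply_self, Equiv.swap_apply_left] at h2
      exact hij h2

lemma exists_row_eq {ι : Type*} [Fintype ι] [DecidableEq ι] (j₀ : ι) (v : ι → K)
    (hv : v ≠ 0) : ∃ g : Matrix ι ι K, IsUnit g.det ∧ g j₀ = v := by
  obtain ⟨T, hT, hTv⟩ := exists_mulVec_single j₀ v hv
  refine ⟨(T⁻¹)ᵀ, ?_, ?_⟩
  · rw [Matrix.det_transpose]
    exact Matrix.isUnit_nonsing_inv_det T hT
  · funext j
    have h1 : (T⁻¹).mulVec (Pi.single j₀ 1) = v := by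
      rw [← hTv, Matrix.mulVec_mulVec, Matrix.nonsing_inv_mul T hT, Matrix.one_mulVec]
    have h2 := congrFun h1 j
    rw [Matrix.mulVec_single] at h2
    simpa using h2


lemma core (y : Fin 2 → Matrix (Fin 3) (Fin 3) K) (a b : Fin 3 → ℝ) (c : Fin 2 → ℝ)
    (ha : ∑ j, a j = 0) (hb : ∑ j, b j = 0) (hc : ∑ i, c i = 0)
    (hne : ¬(a = 0 ∧ b = 0 ∧ c = 0))
    (hsupp : ∀ (i : Fin 2) (j k : Fin 3), y i j k ≠ 0 → a j + b k + c i ≤ 0) :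
    ∃ v : Fin 2 → K, v ≠ 0 ∧ (v 0 • y 0 + v 1 • y 1).det = 0 := by
  have hc2 : c 1 = -(c 0) := by
    rw [Fin.sum_univ_two] at hc; linarith
  have detkill : ∀ (M : Matrix (Fin 3) (Fin 3) K),
      (∀ σ : Equiv.Perm (Fin 3), ∃ k, M (σ k) k = 0) → M.det = 0 := by
    intro M hM
    rw [Matrix.det_apply]
    apply Finset.sum_eq_zero
    intro σ _
    obtain ⟨k, hk⟩ := hM σ
    have hz : (∏ i, M (σ i) i) = 0 := Finset.prod_eq_zero (Finset.mem_univ k) hk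
    rw [hz, smul_zero]
  have e10 : (![(1:K), 0] 0) • y 0 + (![(1:K), 0] 1) • y 1 = y 0 := by
    simp
  have e01 : (![(0:K), 1] 0) • y 0 + (![(0:K), 1] 1) • y 1 = y 1 := by
    simp
  have hne10 : (![(1:K), 0]) ≠ 0 := by
    intro hh; have := congrFun hh 0; simp at this
  have hne01 : (![(0:K), 1]) ≠ 0 := by
    intro hh; have := congrFun hh 1; simp at this
  rcases lt_trichotomy (c 0) 0 with hlt | heq | hgt
  · -- c 1 > 0 : use y 1
    refine ⟨![0, 1], hne01, by
      rw [e01]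
      apply detkill
      intro σ
      by_contra hσ
      push_neg at hσ
      have hsum : ∑ k, (a (σ k) + b k + c 1) ≤ 0 :=
        Finset.sum_nonpos (fun k _ => hsupp 1 (σ k) k (hσ k))
      rw [Finset.sum_add_distrib, Finset.sum_add_distrib, Equiv.sum_comp σ a, ha, hb] at hsum
      simp only [Finset.sum_const, Finset.card_univ, Fintype.card_fin, nsmul_eq_mul] at hsum
      rw [hc2] at hsum
      push_cast at hsum
      linarith⟩
  · -- c = 0 case
    have hc0' : ∀ i : Fin 2, c i = 0 := by
      intro i
      fin_cases i
      · exact heq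
      · show c 1 = 0
        rw [hc2, heq, neg_zero]
    have hab : ∀ (i : Fin 2) (j k : Fin 3), y i j k ≠ 0 → a j + b k ≤ 0 := by
      intro i j k hy
      have h := hsupp i j k hy
      have h2 := hc0' i
      linarith
    have force : ∀ (M : Matrix (Fin 3) (Fin 3) K) (σ : Equiv.Perm (Fin 3)),
        (∀ j k, M j k ≠ 0 → a j + b k ≤ 0) → (¬ ∀ k, a (σ k) + b k = 0) →
        ∃ k, M (σ k) k = 0 := by
      intro M σ hM hσ
      by_contra hall
      push_neg at hall
      apply hσ
      have hle : ∀ k ∈ Finset.univ, a (σ k) + b k ≤ 0 := fun k _ => hM _ _ (hall k)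
      have hs : ∑ k, (a (σ k) + b k) = 0 := by
        rw [Finset.sum_add_distrib, Equiv.sum_comp σ a, ha, hb, add_zero]
      intro k
      exact (Finset.sum_eq_zero_iff_of_nonpos hle).mp hs k (Finset.mem_univ k)
    by_cases hE : ∃ σ₀ : Equiv.Perm (Fin 3), ∀ k, a (σ₀ k) + b k = 0
    · obtain ⟨σ₀, hσ₀⟩ := hE
      have hA0 : a ≠ 0 := by
        intro haz
        apply hne
        refine ⟨haz, ?_, ?_⟩
        · funext k
          have h1 := hσ₀ k
          rw [haz] at h1
          simpa using h1
        · funext i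
          simp [hc0' i]
      have hsum3 : a 0 + a 1 + a 2 = 0 := by rw [← Fin.sum_univ_three a]; exact ha
      have hanc : ∃ r₃ : Fin 3, ∀ k, a k = a r₃ → k = r₃ := by
        have hA0' : ¬(a 0 = 0 ∧ a 1 = 0 ∧ a 2 = 0) := by
          rintro ⟨h0, h1, h2⟩
          apply hA0; funext k; fin_cases k <;> simpa
        by_cases h01 : a 0 = a 1
        · by_cases h02 : a 0 = a 2
          · exact absurd ⟨by linarith, by linarith, by linarith⟩ hA0'
          · refine ⟨2, fun k hk => ?_⟩
            fin_cases k
            · exact absurd hk h02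
            · exact absurd (h01.trans hk) h02
            · rfl
        · by_cases h02 : a 0 = a 2
          · refine ⟨1, fun k hk => ?_⟩
            fin_cases k
            · exact absurd hk h01
            · rfl
            · exact absurd (h02.trans hk) h01
          · refine ⟨0, fun k hk => ?_⟩
            fin_cases k
            · rfl
            · exact absurd hk.symm h01
            · exact absurd hk.symm h02
      obtain ⟨r₃, hr₃⟩ := hanc
      set k₃ : Fin 3 := σ₀⁻¹ r₃ with hk₃
      have hσ₀k₃ : σ₀ k₃ = r₃ := σ₀.apply_symm_apply r₃
      obtain ⟨v, hv0, hvz⟩ : ∃ v : Fin 2 → K, v ≠ 0 ∧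
          (v 0 • y 0 + v 1 • y 1) r₃ k₃ = 0 := by
        by_cases hz : y 0 r₃ k₃ = 0 ∧ y 1 r₃ k₃ = 0
        · exact ⟨![1,0], hne10, by simp [Matrix.add_apply, hz.1, hz.2]⟩
        · refine ⟨![-(y 1 r₃ k₃), y 0 r₃ k₃], ?_, ?_⟩
          · intro hh
            apply hz
            constructor
            · have := congrFun hh 1; simpa using this
            · have := congrFun hh 0; simpa using this
          · simp only [Matrix.add_apply, Matrix.smul_apply, smul_eq_mul,
              Matrix.cons_val_zero, Matrix.cons_val_one, Matrix.head_cons]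
            ring
      refine ⟨v, hv0, ?_⟩
      apply detkill
      intro σ
      by_cases hσE : ∀ k, a (σ k) + b k = 0
      · refine ⟨k₃, ?_⟩
        have hre : σ k₃ = r₃ := by
          apply hr₃
          have h1 := hσE k₃
          have h2 := hσ₀ k₃
          rw [hσ₀k₃] at h2
          linarith
        rw [hre]
        exact hvz
      · apply force _ σ ?_ hσE
        intro j k hjk
        by_cases h0 : y 0 j k = 0
        · by_cases h1 : y 1 j k = 0
          · exfalso; apply hjk; simp [Matrix.add_apply, h0, h1]
          · exact hab 1 j k h1
        · exact hab 0 j k h0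
    · -- no perfect matching : y 0 pencil always singular
      refine ⟨![1, 0], hne10, by
        rw [e10]
        apply detkill
        intro σ
        exact force (y 0) σ (fun j k => hab 0 j k) (fun hall => hE ⟨σ, hall⟩)⟩
  · -- c 0 > 0 : use y 0
    refine ⟨![1, 0], hne10, by
      rw [e10]
      apply detkill
      intro σ
      by_contra hσ
      push_neg at hσ
      have hsum : ∑ k, (a (σ k) + b k + c 0) ≤ 0 :=
        Finset.sum_nonpos (fun k _ => hsupp 0 (σ k) k (hσ k))
      rw [Finset.sum_add_distrib, Finset.sum_add_distrib, Equiv.sum_comp σ a, ha, hb] at hsum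
      simp only [Finset.sum_const, Finset.card_univ, Fintype.card_fin, nsmul_eq_mul] at hsum
      push_cast at hsum
      linarith⟩


abbrev EE := (Fin 3 → ℝ) × (Fin 3 → ℝ) × (Fin 2 → ℝ)

def pairB (v z : EE) : ℝ :=
  (∑ j, v.1 j * z.1 j) + (∑ j, v.2.1 j * z.2.1 j) + (∑ i, v.2.2 i * z.2.2 i)

lemma mul_sum_helper {n : ℕ} (f g : Fin n → ℝ) (c : ℝ) :
    ∑ j, f j * (c * g j) = c * ∑ j, f j * g j := by
  rw [Finset.mul_sum]; exact Finset.sum_congr rfl fun j _ => by ring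

lemma isLinearMap_pairB (v : EE) : IsLinearMap ℝ (pairB v) := by
  constructor
  · intro z z'
    simp only [pairB, Prod.fst_add, Prod.snd_add, Pi.add_apply, mul_add,
      Finset.sum_add_distrib]
    ring
  · intro c z
    simp only [pairB, Prod.smul_fst, Prod.smul_snd, Pi.smul_apply, smul_eq_mul]
    rw [mul_sum_helper, mul_sum_helper, mul_sum_helper]
    ring

def wvec (i : Fin 2) (j l : Fin 3) : EE :=
  (fun a => (if a = j then (1 : ℝ) else 0) - 1/3,
   fun a => (if a = l then (1 : ℝ) else 0) - 1/3,
   fun a => (if a = i then (1 : ℝ) else 0) - 1/2)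

lemma sum_ite_sub {n : ℕ} (w : Fin n → ℝ) (hw : ∑ a, w a = 0) (j : Fin n) (c : ℝ) :
    ∑ a, w a * ((if a = j then (1:ℝ) else 0) - c) = w j := by
  simp only [mul_sub, Finset.sum_sub_distrib, mul_ite, mul_one, mul_zero]
  rw [Finset.sum_ite_eq' Finset.univ j w]
  simp [← Finset.sum_mul, hw]

lemma sum_wvec {n : ℕ} (j : Fin n) (c : ℝ) (hc : (n : ℝ) * c = 1) :
    ∑ a : Fin n, ((if a = j then (1:ℝ) else 0) - c) = 0 := by
  rw [Finset.sum_sub_distrib, Finset.sum_ite_eq' Finset.univ j (fun _ => (1:ℝ)),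
    Finset.sum_const]
  simp only [Finset.mem_univ, if_true, Finset.card_univ, Fintype.card_fin, nsmul_eq_mul]
  rw [hc]; norm_num

lemma wvec_sum1 (i : Fin 2) (j l : Fin 3) : ∑ a, (wvec i j l).1 a = 0 :=
  sum_wvec j (1/3) (by norm_num)

lemma wvec_sum2 (i : Fin 2) (j l : Fin 3) : ∑ a, (wvec i j l).2.1 a = 0 :=
  sum_wvec l (1/3) (by norm_num)

lemma wvec_sum3 (i : Fin 2) (j l : Fin 3) : ∑ a, (wvec i j l).2.2 a = 0 :=
  sum_wvec i (1/2) (by norm_num)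

lemma pairB_wvec (v : EE) (hv1 : ∑ j, v.1 j = 0) (hv2 : ∑ j, v.2.1 j = 0)
    (hv3 : ∑ i, v.2.2 i = 0) (i : Fin 2) (j l : Fin 3) :
    pairB v (wvec i j l) = v.1 j + v.2.1 l + v.2.2 i := by
  unfold pairB wvec
  rw [sum_ite_sub v.1 hv1 j, sum_ite_sub v.2.1 hv2 l, sum_ite_sub v.2.2 hv3 i]

lemma entry_tri {n : Type*} [Fintype n] (A B C : Matrix n n K) (j l : n) :
    (A * B * Cᵀ) j l = (A.mulVec (B.mulVec (C l))) j := by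
  simp only [Matrix.mul_apply, Matrix.transpose_apply, Matrix.mulVec, dotProduct]
  calc ∑ b, (∑ a, A j a * B a b) * C l b
      = ∑ b, ∑ a, A j a * B a b * C l b := by
        refine Finset.sum_congr rfl fun b _ => ?_; rw [Finset.sum_mul]
    _ = ∑ a, ∑ b, A j a * B a b * C l b := Finset.sum_comm
    _ = ∑ a, A j a * ∑ b, B a b * C l b := by
        refine Finset.sum_congr rfl fun a _ => ?_
        rw [Finset.mul_sum]
        exact Finset.sum_congr rfl fun b _ => by ring

lemma unstable_of_root (x : Fin 2 → Matrix (Fin 3) (Fin 3) K) (w : Fin 2 → K)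
    (hw0 : w ≠ 0) (hroot : MvPolynomial.eval w (pen x) = 0) :
    ∃ (g₁ g₂ : GL (Fin 3) K) (g₃ : GL (Fin 2) K), ∀ (i : Fin 2) (j l : Fin 3),
      ((g₁ : Matrix (Fin 3) (Fin 3) K) *
          (∑ j', (g₃ : Matrix (Fin 2) (Fin 2) K) i j' • x j') *
          (g₂ : Matrix (Fin 3) (Fin 3) K)ᵀ) j l ≠ 0 →
      (![(1:ℝ),1,-2]) j + (![(-1:ℝ),-1,2]) l ≤ 0 := by
  obtain ⟨m3, hm3det, hm3row⟩ := exists_row_eq (K := K) (0 : Fin 2) w hw0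
  set N : Matrix (Fin 3) (Fin 3) K := w 0 • x 0 + w 1 • x 1 with hNdef
  have hdetN : N.det = 0 := by rw [← eval_pen, hroot]
  obtain ⟨wk, hwk0, hwkker⟩ := (Matrix.exists_mulVec_eq_zero_iff).mpr hdetN
  obtain ⟨m2, hm2det, hm2row⟩ := exists_row_eq (K := K) (2 : Fin 3) wk hwk0
  set P₀ : Matrix (Fin 3) (Fin 3) K := m3 1 0 • x 0 + m3 1 1 • x 1 with hP₀
  set p : Fin 3 → K := P₀.mulVec wk with hp
  obtain ⟨m1, hm1det, hm1p⟩ : ∃ m1 : Matrix (Fin 3) (Fin 3) K, IsUnit m1.det ∧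
      ∀ j : Fin 3, j ≠ 2 → (m1.mulVec p) j = 0 := by
    by_cases hpz : p = 0
    · exact ⟨1, by simp, fun j _ => by simp [hpz]⟩
    · obtain ⟨T, hT, hTp⟩ := exists_mulVec_single (K := K) (2 : Fin 3) p hpz
      exact ⟨T, hT, fun j hj => by rw [hTp]; exact Pi.single_eq_of_ne hj 1⟩
  refine ⟨Matrix.GeneralLinearGroup.mk'' m1 hm1det,
    Matrix.GeneralLinearGroup.mk'' m2 hm2det,
    Matrix.GeneralLinearGroup.mk'' m3 hm3det, ?_⟩
  have hco1 : ((Matrix.GeneralLinearGroup.mk'' m1 hm1det : GL (Fin 3) K) :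
      Matrix (Fin 3) (Fin 3) K) = m1 := rfl
  have hco2 : ((Matrix.GeneralLinearGroup.mk'' m2 hm2det : GL (Fin 3) K) :
      Matrix (Fin 3) (Fin 3) K) = m2 := rfl
  have hco3 : ((Matrix.GeneralLinearGroup.mk'' m3 hm3det : GL (Fin 2) K) :
      Matrix (Fin 2) (Fin 2) K) = m3 := rfl
  intro i j l hent
  rw [hco1, hco2, hco3] at hent
  -- the inner sum
  have hsum_i : (∑ j', m3 i j' • x j') = m3 i 0 • x 0 + m3 i 1 • x 1 := by
    rw [Fin.sum_univ_two]
  rw [hsum_i] at hent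
  have haj : (![(1:ℝ),1,-2]) j ≤ 1 := by fin_cases j <;> norm_num
  have hi : i = 0 ∨ i = 1 := by omega
  rcases hi with rfl | rfl
  · -- i = 0 : matrix is m1 * N * m2ᵀ ; column l = 2 vanishes
    have hNN : m3 0 0 • x 0 + m3 0 1 • x 1 = N := by
      rw [hNdef, hm3row]
    rw [hNN] at hent
    by_cases hl : l = 2
    · exfalso
      apply hent
      rw [hl, entry_tri, hm2row, hwkker]
      simp [Matrix.mulVec_zero]
    · have hbl : (![(-1:ℝ),-1,2]) l = -1 := by
        fin_cases l
        · norm_num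
        · norm_num
        · exact absurd rfl hl
      rw [hbl]; linarith
  · -- i = 1
    rw [show m3 1 0 • x 0 + m3 1 1 • x 1 = P₀ from rfl] at hent
    by_cases hl : l = 2
    · by_cases hj : j = 2
      · rw [hj, hl]; simp
      · exfalso
        apply hent
        rw [hl, entry_tri, hm2row, ← hp]
        exact hm1p j hj
    · have hbl : (![(-1:ℝ),-1,2]) l = -1 := by
        fin_cases l
        · norm_num
        · norm_num
        · exact absurd rfl hl
      rw [hbl]; linarith


lemma stable_pos [Infinite K] [CharZero K] (x : Fin 2 → Matrix (Fin 3) (Fin 3) K)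
    (hirr : Irreducible (pen x))
    (m1 m2 : Matrix (Fin 3) (Fin 3) K) (m3 : Matrix (Fin 2) (Fin 2) K)
    (h1 : IsUnit m1.det) (h2 : IsUnit m2.det) (h3 : IsUnit m3.det)
    (v : EE) (hv1 : ∑ j, v.1 j = 0) (hv2 : ∑ j, v.2.1 j = 0) (hv3 : ∑ i, v.2.2 i = 0)
    (hv0 : v ≠ 0) :
    ∃ (i : Fin 2) (j l : Fin 3),
      (m1 * (∑ j', m3 i j' • x j') * m2ᵀ) j l ≠ 0 ∧ 0 < v.1 j + v.2.1 l + v.2.2 i := by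
  by_contra hcon
  push_neg at hcon
  set ym : Fin 2 → Matrix (Fin 3) (Fin 3) K :=
    fun i => m1 * (∑ j', m3 i j' • x j') * m2ᵀ with hym
  have hne : ¬(v.1 = 0 ∧ v.2.1 = 0 ∧ v.2.2 = 0) := by
    rintro ⟨e1, e2, e3⟩
    exact hv0 (Prod.ext e1 (Prod.ext e2 e3))
  obtain ⟨u, hu0, hudet⟩ := core ym v.1 v.2.1 v.2.2 hv1 hv2 hv3 hne
    (fun i j k h => hcon i j k h)
  set u' : Fin 2 → K := fun jj => u 0 * m3 0 jj + u 1 * m3 1 jj with hu'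
  have hcomb : u 0 • ym 0 + u 1 • ym 1 = m1 * (u' 0 • x 0 + u' 1 • x 1) * m2ᵀ := by
    rw [hym]
    simp only [Fin.sum_univ_two, hu']
    simp only [Matrix.mul_add, Matrix.add_mul, Matrix.mul_smul, Matrix.smul_mul,
      smul_smul, smul_add, add_smul]
    module
  have hZ : (u' 0 • x 0 + u' 1 • x 1).det = 0 := by
    rw [hcomb, Matrix.det_mul, Matrix.det_mul, Matrix.det_transpose] at hudet
    have hm1ne : m1.det ≠ 0 := h1.ne_zero
    have hm2ne : m2.det ≠ 0 := h2.ne_zero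
    rcases mul_eq_zero.mp hudet with hh | hh
    · rcases mul_eq_zero.mp hh with hh2 | hh2
      · exact absurd hh2 hm1ne
      · exact hh2
    · exact absurd hh hm2ne
  have hvm : Matrix.vecMul u m3 = u' := by
    funext jj
    rw [Matrix.vecMul, dotProduct, Fin.sum_univ_two]
  have hu'0 : u' ≠ 0 := by
    intro hh
    apply hu0
    have : Matrix.vecMul u' m3⁻¹ = u := by
      rw [← hvm, Matrix.vecMul_vecMul, Matrix.mul_nonsing_inv _ h3, Matrix.vecMul_one]
    rw [← this, hh]
    funext jj
    simp [Matrix.vecMul]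
  have hroot : MvPolynomial.eval u' (pen x) = 0 := by rw [eval_pen]; exact hZ
  exact hu'0 (no_root_of_irreducible x hirr u' hroot)


lemma wvec_def (i : Fin 2) (j l : Fin 3) :
    wvec i j l = (fun a => (if a = j then (1 : ℝ) else 0) - 1/3,
      fun a => (if a = l then (1 : ℝ) else 0) - 1/3,
      fun a => (if a = i then (1 : ℝ) else 0) - 1/2) := rfl

lemma pair_nonneg_bound (vl y : EE) :
    pairB vl y ≤ 8 * (‖vl‖ * ‖y‖) := by
  have key : ∀ (c d : ℝ), |c| ≤ ‖vl‖ → |d| ≤ ‖y‖ → c * d ≤ ‖vl‖ * ‖y‖ := by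
    intro c d hc hd
    calc c * d ≤ |c * d| := le_abs_self _
      _ = |c| * |d| := abs_mul _ _
      _ ≤ ‖vl‖ * ‖y‖ := mul_le_mul hc hd (abs_nonneg _) (norm_nonneg _)
  have h1 : ∀ j, vl.1 j * y.1 j ≤ ‖vl‖ * ‖y‖ := fun j =>
    key _ _ ((norm_le_pi_norm vl.1 j).trans (norm_fst_le vl))
      ((norm_le_pi_norm y.1 j).trans (norm_fst_le y))
  have h2 : ∀ j, vl.2.1 j * y.2.1 j ≤ ‖vl‖ * ‖y‖ := fun j =>
    key _ _ ((norm_le_pi_norm vl.2.1 j).trans ((norm_fst_le vl.2).trans (norm_snd_le vl)))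
      ((norm_le_pi_norm y.2.1 j).trans ((norm_fst_le y.2).trans (norm_snd_le y)))
  have h3 : ∀ i, vl.2.2 i * y.2.2 i ≤ ‖vl‖ * ‖y‖ := fun i =>
    key _ _ ((norm_le_pi_norm vl.2.2 i).trans ((norm_snd_le vl.2).trans (norm_snd_le vl)))
      ((norm_le_pi_norm y.2.2 i).trans ((norm_snd_le y.2).trans (norm_snd_le y)))
  have s1 : ∑ j, vl.1 j * y.1 j ≤ 3 * (‖vl‖ * ‖y‖) := by
    calc ∑ j, vl.1 j * y.1 j ≤ ∑ _j : Fin 3, ‖vl‖ * ‖y‖ :=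
          Finset.sum_le_sum (fun j _ => h1 j)
      _ = 3 * (‖vl‖ * ‖y‖) := by
          simp [Finset.sum_const]
  have s2 : ∑ j, vl.2.1 j * y.2.1 j ≤ 3 * (‖vl‖ * ‖y‖) := by
    calc ∑ j, vl.2.1 j * y.2.1 j ≤ ∑ _j : Fin 3, ‖vl‖ * ‖y‖ :=
          Finset.sum_le_sum (fun j _ => h2 j)
      _ = 3 * (‖vl‖ * ‖y‖) := by simp [Finset.sum_const]
  have s3 : ∑ i, vl.2.2 i * y.2.2 i ≤ 2 * (‖vl‖ * ‖y‖) := by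
    calc ∑ i, vl.2.2 i * y.2.2 i ≤ ∑ _i : Fin 2, ‖vl‖ * ‖y‖ :=
          Finset.sum_le_sum (fun i _ => h3 i)
      _ = 2 * (‖vl‖ * ‖y‖) := by simp [Finset.sum_const]
  unfold pairB
  linarith


lemma hlin_f (f : EE →L[ℝ] ℝ) (z : EE) :
    f z = ∑ j, z.1 j * f ((Pi.single j 1 : Fin 3 → ℝ), 0, 0)
      + ∑ j, z.2.1 j * f (0, (Pi.single j 1 : Fin 3 → ℝ), 0)
      + ∑ i, z.2.2 i * f (0, 0, (Pi.single i 1 : Fin 2 → ℝ)) := by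
  have hz : z = (∑ j, z.1 j • (((Pi.single j 1 : Fin 3 → ℝ), 0, 0) : EE))
      + (∑ j, z.2.1 j • ((0, (Pi.single j 1 : Fin 3 → ℝ), 0) : EE))
      + (∑ i, z.2.2 i • ((0, 0, (Pi.single i 1 : Fin 2 → ℝ)) : EE)) := by
    have hsingle : ∀ (n : ℕ) (w : Fin n → ℝ),
        ∑ j, w j • (Pi.single j 1 : Fin n → ℝ) = w := by
      intro n w
      have hj : ∀ j : Fin n, w j • (Pi.single j 1 : Fin n → ℝ) = Pi.single j (w j) := by
        intro j
        funext a
        by_cases h : a = j <;> simp [Pi.single_apply, h]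
      rw [Finset.sum_congr rfl (fun j _ => hj j)]
      exact Finset.univ_sum_single w
    refine Prod.ext ?_ (Prod.ext ?_ ?_)
    · simp only [Prod.fst_add, Prod.fst_sum, Prod.smul_fst, smul_zero,
        Finset.sum_const, smul_eq_mul, mul_zero]
      rw [hsingle 3 z.1]
      simp
    · simp only [Prod.snd_add, Prod.snd_sum, Prod.smul_snd, Prod.fst_add, Prod.fst_sum,
        Prod.smul_fst, smul_zero, Finset.sum_const]
      rw [hsingle 3 z.2.1]
      simp
    · simp only [Prod.snd_add, Prod.snd_sum, Prod.smul_snd, smul_zero, Finset.sum_const]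
      rw [hsingle 2 z.2.2]
      simp
  conv_lhs => rw [hz]
  rw [map_add, map_add, map_sum, map_sum, map_sum]
  congr 1
  congr 1
  · exact Finset.sum_congr rfl fun j _ => by rw [ContinuousLinearMap.map_smul]; rfl
  · exact Finset.sum_congr rfl fun j _ => by rw [ContinuousLinearMap.map_smul]; rfl
  · exact Finset.sum_congr rfl fun i _ => by rw [ContinuousLinearMap.map_smul]; rfl

end E6proof
end

set_option maxHeartbeats 2000000 in
open E6proof in
/-- Theorem (2.1), `E₆` case: for a pair `x = (x₁, x₂)` of `3×3` matrices over a number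
field `K`, the binary cubic form `F_x(X,Y) = det(X·x₁ + Y·x₂)` is irreducible in `K[X,Y]`
if and only if `x` is `K`-stable: for every
`g = (g₁, g₂, g₃) ∈ GL₃(K) × GL₃(K) × GL₂(K)`, the convex hull of the projected weight
vectors `(e_j - (1/3)(1,1,1), e_k - (1/3)(1,1,1), f_i - (1/2)(1,1))` of the nonvanishing
coordinates of `g·x` contains a neighborhood of the origin in the trace-zero subspace
`𝔱* ⊆ ℝ³ × ℝ³ × ℝ²`.  Here `(g·x)_i = g₁ · (∑ j, (g₃)_{ij} x_j) · g₂ᵀ`, which encodes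
`M_{g·x}(v) = g₁ · M_x(v·g₃) · g₂ᵀ`. -/
theorem irreducible_iff_kStable_E6 {K : Type*} [Field K] [NumberField K]
    (x : Fin 2 → Matrix (Fin 3) (Fin 3) K) :
    Irreducible ((Matrix.of fun a b =>
        (X 0 : MvPolynomial (Fin 2) K) * C (x 0 a b) + X 1 * C (x 1 a b)).det) ↔
      ∀ (g₁ g₂ : GL (Fin 3) K) (g₃ : GL (Fin 2) K),
        ∃ r > 0, ∀ y : (Fin 3 → ℝ) × (Fin 3 → ℝ) × (Fin 2 → ℝ),
          (∑ a, y.1 a = 0 ∧ ∑ a, y.2.1 a = 0 ∧ ∑ a, y.2.2 a = 0) → ‖y‖ < r →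
          y ∈ convexHull ℝ
            {w : (Fin 3 → ℝ) × (Fin 3 → ℝ) × (Fin 2 → ℝ) |
              ∃ (i : Fin 2) (j l : Fin 3),
                ((g₁ : Matrix (Fin 3) (Fin 3) K) *
                    (∑ j', (g₃ : Matrix (Fin 2) (Fin 2) K) i j' • x j') *
                    (g₂ : Matrix (Fin 3) (Fin 3) K)ᵀ) j l ≠ 0 ∧
                  w = (fun a => (if a = j then (1 : ℝ) else 0) - 1/3,
                       fun a => (if a = l then (1 : ℝ) else 0) - 1/3,
                       fun a => (if a = i then (1 : ℝ) else 0) - 1/2)} := by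
  classical
  constructor
  · -- irreducible → stable
    intro hirr g₁ g₂ g₃
    have hirr' : Irreducible (pen x) := hirr
    set m1 : Matrix (Fin 3) (Fin 3) K := ↑g₁ with hm1
    set m2 : Matrix (Fin 3) (Fin 3) K := ↑g₂ with hm2
    set m3 : Matrix (Fin 2) (Fin 2) K := ↑g₃ with hm3
    have h1 : IsUnit m1.det := (Matrix.isUnit_iff_isUnit_det m1).mp g₁.isUnit
    have h2 : IsUnit m2.det := (Matrix.isUnit_iff_isUnit_det m2).mp g₂.isUnit
    have h3 : IsUnit m3.det := (Matrix.isUnit_iff_isUnit_det m3).mp g₃.isUnit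
    set ym : Fin 2 → Matrix (Fin 3) (Fin 3) K :=
      fun i => m1 * (∑ j', m3 i j' • x j') * m2ᵀ with hym
    set W : Set EE := {w : EE |
      ∃ (i : Fin 2) (j l : Fin 3), ym i j l ≠ 0 ∧
        w = (fun a => (if a = j then (1 : ℝ) else 0) - 1/3,
             fun a => (if a = l then (1 : ℝ) else 0) - 1/3,
             fun a => (if a = i then (1 : ℝ) else 0) - 1/2)} with hW
    -- the nonzero coordinate index set
    set S : Finset (Fin 2 × Fin 3 × Fin 3) :=
      Finset.univ.filter (fun t => ym t.1 t.2.1 t.2.2 ≠ 0) with hSdef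
    have hS : S.Nonempty := by
      set v₀ : EE := ((![1,-1,0] : Fin 3 → ℝ), (0 : Fin 3 → ℝ), (0 : Fin 2 → ℝ)) with hv₀
      have hv₀1 : ∑ j, v₀.1 j = 0 := by simp [hv₀, Fin.sum_univ_three]
      have hv₀2 : ∑ j, v₀.2.1 j = 0 := by simp [hv₀]
      have hv₀3 : ∑ i, v₀.2.2 i = 0 := by simp [hv₀]
      have hv₀0 : v₀ ≠ 0 := by
        intro hh
        have := congrFun (congrArg Prod.fst hh) 0
        simp [hv₀] at this
      obtain ⟨i, j, l, hent, -⟩ :=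
        stable_pos x hirr' m1 m2 m3 h1 h2 h3 v₀ hv₀1 hv₀2 hv₀3 hv₀0
      exact ⟨(i, j, l), Finset.mem_filter.mpr ⟨Finset.mem_univ _, hent⟩⟩
    set φ : EE → ℝ :=
      fun v => S.sup' hS (fun t => v.1 t.2.1 + v.2.1 t.2.2 + v.2.2 t.1) with hφ
    have hcont : Continuous φ := by
      rw [continuous_iff_continuousAt]
      intro v
      have hct : ∀ t : Fin 2 × Fin 3 × Fin 3,
          Continuous (fun v : EE => v.1 t.2.1 + v.2.1 t.2.2 + v.2.2 t.1) := by
        intro t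
        fun_prop
      exact ContinuousAt.finset_sup'_apply hS (fun t _ => (hct t).continuousAt)
    set sphT : Set EE := {v : EE |
      (∑ j, v.1 j = 0 ∧ ∑ j, v.2.1 j = 0 ∧ ∑ i, v.2.2 i = 0) ∧ ‖v‖ = 1} with hsphT
    have hclosed : IsClosed sphT := by
      have c1 : Continuous fun v : EE => ∑ j, v.1 j :=
        continuous_finset_sum _ (fun j _ => (continuous_apply j).comp continuous_fst)
      have c2 : Continuous fun v : EE => ∑ j, v.2.1 j :=
        continuous_finset_sum _
          (fun j _ => (continuous_apply j).comp (continuous_fst.comp continuous_snd))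
      have c3 : Continuous fun v : EE => ∑ i, v.2.2 i :=
        continuous_finset_sum _
          (fun i _ => (continuous_apply i).comp (continuous_snd.comp continuous_snd))
      have : sphT = (({v : EE | ∑ j, v.1 j = 0} ∩ {v | ∑ j, v.2.1 j = 0}) ∩
          {v | ∑ i, v.2.2 i = 0}) ∩ {v | ‖v‖ = 1} := by
        ext v; simp [hsphT]; tauto
      rw [this]
      exact (((isClosed_eq c1 continuous_const).inter (isClosed_eq c2 continuous_const)).inter
        (isClosed_eq c3 continuous_const)).inter (isClosed_eq continuous_norm continuous_const)
    have hcomp : IsCompact sphT := by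
      apply (isCompact_closedBall (0 : EE) 1).of_isClosed_subset hclosed
      intro v hv
      rw [Metric.mem_closedBall, dist_zero_right]
      exact le_of_eq hv.2
    have hne_s : sphT.Nonempty := by
      refine ⟨((![1,-1,0] : Fin 3 → ℝ), (0 : Fin 3 → ℝ), (0 : Fin 2 → ℝ)), ⟨?_, ?_⟩⟩
      · refine ⟨by simp [Fin.sum_univ_three], by simp, by simp⟩
      · have hpi : ‖(![1,-1,0] : Fin 3 → ℝ)‖ = 1 := by
          apply le_antisymm
          · apply (pi_norm_le_iff_of_nonneg (by norm_num)).mpr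
            intro i
            fin_cases i <;> simp [Real.norm_eq_abs] <;> norm_num
          · calc (1:ℝ) = ‖(![1,-1,0] : Fin 3 → ℝ) 0‖ := by
                  simp [Real.norm_eq_abs]
              _ ≤ _ := norm_le_pi_norm _ 0
        rw [Prod.norm_def, Prod.norm_def]
        simp [hpi]
    obtain ⟨vm, hvmS, hvmmin⟩ := hcomp.exists_isMinOn hne_s hcont.continuousOn
    set δ : ℝ := φ vm with hδ
    have hδpos : 0 < δ := by
      have hvm0 : vm ≠ 0 := by
        intro hh
        have := hvmS.2
        rw [hh, norm_zero] at this
        norm_num at this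
      obtain ⟨i, j, l, hent, hpos⟩ := stable_pos x hirr' m1 m2 m3 h1 h2 h3 vm
        hvmS.1.1 hvmS.1.2.1 hvmS.1.2.2 hvm0
      have hmem : (i, j, l) ∈ S := Finset.mem_filter.mpr ⟨Finset.mem_univ _, hent⟩
      have := Finset.le_sup' (fun t : Fin 2 × Fin 3 × Fin 3 =>
        vm.1 t.2.1 + vm.2.1 t.2.2 + vm.2.2 t.1) hmem
      calc (0:ℝ) < vm.1 j + vm.2.1 l + vm.2.2 i := hpos
        _ ≤ δ := this
    refine ⟨δ / 8, by positivity, ?_⟩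
    intro y hy hynorm
    by_contra hyC
    have hWsub : W ⊆ Set.range (fun t : Fin 2 × Fin 3 × Fin 3 => wvec t.1 t.2.1 t.2.2) := by
      rintro w ⟨i, j, l, hent, rfl⟩
      exact ⟨(i, j, l), rfl⟩
    have hWfin : W.Finite := Set.Finite.subset (Set.finite_range _) hWsub
    have hWcl : IsClosed (convexHull ℝ W) := (hWfin.isCompact_convexHull ℝ).isClosed
    obtain ⟨f, uu, hfw, hfy⟩ :=
      geometric_hahn_banach_closed_point (convex_convexHull ℝ W) hWcl hyC
    set vl : EE := (fun j => f ((Pi.single j 1 : Fin 3 → ℝ), 0, 0)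
          - (∑ j', f ((Pi.single j' 1 : Fin 3 → ℝ), 0, 0)) / 3,
        fun l => f (0, (Pi.single l 1 : Fin 3 → ℝ), 0)
          - (∑ l', f (0, (Pi.single l' 1 : Fin 3 → ℝ), 0)) / 3,
        fun i => f (0, 0, (Pi.single i 1 : Fin 2 → ℝ))
          - (∑ i', f (0, 0, (Pi.single i' 1 : Fin 2 → ℝ))) / 2) with hvl
    have hvl1 : ∑ j, vl.1 j = 0 := by
      simp only [hvl, Fin.sum_univ_three]
      ring
    have hvl2 : ∑ j, vl.2.1 j = 0 := by
      simp only [hvl, Fin.sum_univ_three]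
      ring
    have hvl3 : ∑ i, vl.2.2 i = 0 := by
      simp only [hvl, Fin.sum_univ_two]
      ring
    have hfT : ∀ z : EE, ∑ j, z.1 j = 0 → ∑ j, z.2.1 j = 0 → ∑ i, z.2.2 i = 0 →
        f z = pairB vl z := by
      intro z hz1 hz2 hz3
      rw [hlin_f f z]
      unfold pairB
      have hbl : ∀ (n : ℕ) (g w : Fin n → ℝ) (c : ℝ), (∑ j, w j = 0) →
          ∑ j, (g j - c) * w j = ∑ j, w j * g j := by
        intro n g w c hw
        calc ∑ j, (g j - c) * w j = ∑ j, (w j * g j - c * w j) :=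
              Finset.sum_congr rfl fun j _ => by ring
          _ = ∑ j, w j * g j - c * ∑ j, w j := by
              rw [Finset.sum_sub_distrib, Finset.mul_sum]
          _ = ∑ j, w j * g j := by rw [hw, mul_zero, sub_zero]
      rw [show ∑ j, vl.1 j * z.1 j = ∑ j, z.1 j * f ((Pi.single j 1 : Fin 3 → ℝ), 0, 0) from by
        rw [← hbl 3 _ z.1 _ hz1]]
      rw [show ∑ j, vl.2.1 j * z.2.1 j
          = ∑ j, z.2.1 j * f (0, (Pi.single j 1 : Fin 3 → ℝ), 0) from by
        rw [← hbl 3 _ z.2.1 _ hz2]]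
      rw [show ∑ i, vl.2.2 i * z.2.2 i
          = ∑ i, z.2.2 i * f (0, 0, (Pi.single i 1 : Fin 2 → ℝ)) from by
        rw [← hbl 2 _ z.2.2 _ hz3]]
    have hScopy := hS
    obtain ⟨t₀, ht₀S⟩ := hScopy
    have hw₀W : wvec t₀.1 t₀.2.1 t₀.2.2 ∈ W :=
      ⟨t₀.1, t₀.2.1, t₀.2.2, (Finset.mem_filter.mp ht₀S).2, rfl⟩
    by_cases hvz : vl = 0
    · have hz1 : f (wvec t₀.1 t₀.2.1 t₀.2.2) = 0 := by
        rw [hfT _ (wvec_sum1 _ _ _) (wvec_sum2 _ _ _) (wvec_sum3 _ _ _), hvz]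
        simp [pairB]
      have hz2 : f y = 0 := by
        rw [hfT y hy.1 hy.2.1 hy.2.2, hvz]
        simp [pairB]
      have := hfw _ (subset_convexHull ℝ W hw₀W)
      rw [hz1] at this
      rw [hz2] at hfy
      linarith
    · have hnv : 0 < ‖vl‖ := norm_pos_iff.mpr hvz
      set vhat : EE := ‖vl‖⁻¹ • vl with hvhat
      have hvhatS : vhat ∈ sphT := by
        constructor
        · refine ⟨?_, ?_, ?_⟩ <;>
          · simp only [hvhat, Prod.smul_fst, Prod.smul_snd, Pi.smul_apply, smul_eq_mul,
              ← Finset.mul_sum]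
            first
            | rw [hvl1, mul_zero]
            | rw [hvl2, mul_zero]
            | rw [hvl3, mul_zero]
        · rw [norm_smul, norm_inv, norm_norm]
          field_simp
      have hδle : δ ≤ φ vhat := hvmmin hvhatS
      obtain ⟨t1, ht1S, ht1le⟩ := (Finset.le_sup'_iff hS).mp hδle
      have hP : δ * ‖vl‖ ≤ vl.1 t1.2.1 + vl.2.1 t1.2.2 + vl.2.2 t1.1 := by
        have hval : vhat.1 t1.2.1 + vhat.2.1 t1.2.2 + vhat.2.2 t1.1
            = ‖vl‖⁻¹ * (vl.1 t1.2.1 + vl.2.1 t1.2.2 + vl.2.2 t1.1) := by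
          simp only [hvhat, Prod.smul_fst, Prod.smul_snd, Pi.smul_apply, smul_eq_mul]
          ring
        rw [hval, inv_mul_eq_div, le_div_iff₀ hnv] at ht1le
        linarith
      have hw1W : wvec t1.1 t1.2.1 t1.2.2 ∈ W :=
        ⟨t1.1, t1.2.1, t1.2.2, (Finset.mem_filter.mp ht1S).2, rfl⟩
      have hfw1 : f (wvec t1.1 t1.2.1 t1.2.2) < uu := hfw _ (subset_convexHull ℝ W hw1W)
      have hfw1' : f (wvec t1.1 t1.2.1 t1.2.2)
          = vl.1 t1.2.1 + vl.2.1 t1.2.2 + vl.2.2 t1.1 := by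
        rw [hfT _ (wvec_sum1 _ _ _) (wvec_sum2 _ _ _) (wvec_sum3 _ _ _)]
        exact pairB_wvec vl hvl1 hvl2 hvl3 _ _ _
      have hfyv : f y = pairB vl y := hfT y hy.1 hy.2.1 hy.2.2
      have hbound : pairB vl y ≤ 8 * (‖vl‖ * ‖y‖) := pair_nonneg_bound vl y
      have hsmall : 8 * (‖vl‖ * ‖y‖) < δ * ‖vl‖ := by
        have h8 : 0 < 8 * ‖vl‖ := by positivity
        calc 8 * (‖vl‖ * ‖y‖) = (8 * ‖vl‖) * ‖y‖ := by ring
          _ < (8 * ‖vl‖) * (δ/8) := by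
              exact mul_lt_mul_of_pos_left hynorm h8
          _ = δ * ‖vl‖ := by ring
      rw [hfw1'] at hfw1
      rw [hfyv] at hfy
      linarith
  · -- stable → irreducible
    intro hstab
    by_contra hnirr
    have hnirr' : ¬ Irreducible (pen x) := hnirr
    obtain ⟨w, hw0, hroot⟩ := exists_root_of_not_irreducible x hnirr'
    obtain ⟨g₁, g₂, g₃, hsupp⟩ := unstable_of_root x w hw0 hroot
    obtain ⟨r, hr, hball⟩ := hstab g₁ g₂ g₃
    set lv : EE := ((![1,1,-2] : Fin 3 → ℝ), (![-1,-1,2] : Fin 3 → ℝ), (0 : Fin 2 → ℝ))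
      with hlv
    have hlv1 : ∑ j, lv.1 j = 0 := by simp [hlv, Fin.sum_univ_three]; norm_num
    have hlv2 : ∑ j, lv.2.1 j = 0 := by simp [hlv, Fin.sum_univ_three]; norm_num
    have hlv3 : ∑ i, lv.2.2 i = 0 := by simp [hlv]
    set y0 : EE := (r/4) • lv with hy0
    have hy01 : ∑ a, y0.1 a = 0 := by
      simp only [hy0, Prod.smul_fst, Pi.smul_apply, smul_eq_mul, ← Finset.mul_sum]
      rw [hlv1, mul_zero]
    have hy02 : ∑ a, y0.2.1 a = 0 := by
      simp only [hy0, Prod.smul_snd, Prod.smul_fst, Pi.smul_apply, smul_eq_mul,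
        ← Finset.mul_sum]
      rw [hlv2, mul_zero]
    have hy03 : ∑ a, y0.2.2 a = 0 := by
      simp only [hy0, Prod.smul_snd, Pi.smul_apply, smul_eq_mul, ← Finset.mul_sum]
      rw [hlv3, mul_zero]
    have hy0norm : ‖y0‖ < r := by
      have hb1 : ‖(![1,1,-2] : Fin 3 → ℝ)‖ ≤ 2 := by
        apply (pi_norm_le_iff_of_nonneg (by norm_num)).mpr
        intro i
        fin_cases i <;> simp [Real.norm_eq_abs] <;> norm_num
      have hb2 : ‖(![-1,-1,2] : Fin 3 → ℝ)‖ ≤ 2 := by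
        apply (pi_norm_le_iff_of_nonneg (by norm_num)).mpr
        intro i
        fin_cases i <;> simp [Real.norm_eq_abs] <;> norm_num
      have hle : ‖y0‖ ≤ r/2 := by
        rw [hy0, Prod.norm_def, Prod.norm_def]
        have h4 : (0:ℝ) < 4 := by norm_num
        have hq : ‖r/4‖ = r/4 := by
          rw [Real.norm_eq_abs, abs_of_pos (by positivity)]
        apply max_le
        · rw [Prod.smul_fst, norm_smul, hq]
          calc r/4 * ‖(![1,1,-2] : Fin 3 → ℝ)‖ ≤ r/4 * 2 := by
                apply mul_le_mul_of_nonneg_left hb1 (by positivity)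
            _ = r/2 := by ring
        · apply max_le
          · rw [Prod.smul_snd, Prod.smul_fst, norm_smul, hq]
            calc r/4 * ‖(![-1,-1,2] : Fin 3 → ℝ)‖ ≤ r/4 * 2 := by
                  apply mul_le_mul_of_nonneg_left hb2 (by positivity)
              _ = r/2 := by ring
          · rw [Prod.smul_snd, Prod.smul_snd, norm_smul, hq]
            simp only [hlv]
            rw [norm_zero, mul_zero]
            positivity
      linarith
    have hmem := hball y0 ⟨hy01, hy02, hy03⟩ hy0norm
    have hhs : convexHull ℝ {w : EE |
        ∃ (i : Fin 2) (j l : Fin 3),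
          ((g₁ : Matrix (Fin 3) (Fin 3) K) *
              (∑ j', (g₃ : Matrix (Fin 2) (Fin 2) K) i j' • x j') *
              (g₂ : Matrix (Fin 3) (Fin 3) K)ᵀ) j l ≠ 0 ∧
            w = (fun a => (if a = j then (1 : ℝ) else 0) - 1/3,
                 fun a => (if a = l then (1 : ℝ) else 0) - 1/3,
                 fun a => (if a = i then (1 : ℝ) else 0) - 1/2)}
        ⊆ {z : EE | pairB lv z ≤ 0} := by
      apply convexHull_min
      · rintro w' ⟨i, j, l, hent, rfl⟩
        show pairB lv (wvec i j l) ≤ 0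
        rw [pairB_wvec lv hlv1 hlv2 hlv3 i j l]
        have := hsupp i j l hent
        simp only [hlv]
        simpa using this
      · exact convex_halfSpace_le (isLinearMap_pairB lv) 0
    have hle0 : pairB lv y0 ≤ 0 := hhs hmem
    have hval : pairB lv y0 = (r/4) * 12 := by
      rw [hy0, (isLinearMap_pairB lv).2 (r/4) lv, smul_eq_mul]
      congr 1
      simp [pairB, hlv, Fin.sum_univ_three, Fin.sum_univ_two]
      norm_num
    rw [hval] at hle0
    linarith
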